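/- (Stationary discrete Carleman inequality.) Let d ≥ 1. There exists a constant c = c(d) > 0 such that for all α > 0 and R > 0, the inequality √(sinh(2α/R²)) · sinh(2α/(√d·R)) · ‖e^{α|j/R + 3e₁|²} g‖_{ℓ²(ℤ^d)} ≤ c · ‖e^{α|j/R + 3e₁|²} Δ_d g‖_{ℓ²(ℤ^d)} holds for every finitely supported g : ℤ^d → ℂ whose support is contained in the set {j ∈ ℤ^d : |j/R + 3e₁|² ≥ 1}. -/

import Mathlib

/-- Discrete Laplacian on `ℤ^d`:
`Δ_d f j = Σ_{k=1}^d (f (j+e_k) + f (j-e_k) - 2 f j)`. -/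
noncomputable def discreteLap {d : ℕ} (f : (Fin d → ℤ) → ℂ) (j : Fin d → ℤ) : ℂ :=
  ∑ k, (f (j + Pi.single k 1) + f (j - Pi.single k 1) - 2 * f j)

/-- The stationary Carleman weight exponent `|j/R + 3e₁|²`, where `j ∈ ℤ^d` is viewed as
a point of `ℝ^d` and `e₁` is the first standard basis vector. -/
noncomputable def wgt3 {d : ℕ} (R : ℝ) (j : Fin d → ℤ) : ℝ :=
  ∑ k, ((j k : ℝ) / R + if (k : ℕ) = 0 then 3 else 0) ^ 2

namespace CarlemanAux

open Function

variable {n : ℕ}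

abbrev Zn (n : ℕ) := Fin n → ℤ

noncomputable def ee (k : Fin n) : Zn n := Pi.single k 1

noncomputable def xx (R : ℝ) (k : Fin n) (j : Zn n) : ℝ :=
  (j k : ℝ) / R + if (k : ℕ) = 0 then 3 else 0

noncomputable def aa (α R : ℝ) (k : Fin n) (j : Zn n) : ℝ := 2 * α * xx R k j / R

lemma apply_add_ee (j : Zn n) (k l : Fin n) :
    (j + ee l) k = j k + if k = l then 1 else 0 := by
  simp [ee, Pi.single_apply]

lemma apply_sub_ee (j : Zn n) (k l : Fin n) :
    (j - ee l) k = j k - if k = l then 1 else 0 := by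
  simp [ee, Pi.single_apply]

lemma xx_add (R : ℝ) (k l : Fin n) (j : Zn n) :
    xx R k (j + ee l) = xx R k j + if k = l then 1 / R else 0 := by
  simp only [xx, apply_add_ee]
  split <;> push_cast <;> ring

lemma xx_sub (R : ℝ) (k l : Fin n) (j : Zn n) :
    xx R k (j - ee l) = xx R k j - if k = l then 1 / R else 0 := by
  simp only [xx, apply_sub_ee]
  split <;> push_cast <;> ring

lemma aa_add_self (α : ℝ) {R : ℝ} (hR : R ≠ 0) (k : Fin n) (j : Zn n) :
    aa α R k (j + ee k) = aa α R k j + 2 * (α / R ^ 2) := by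
  simp only [aa, xx_add, if_pos rfl, ↓reduceIte]
  field_simp

lemma aa_sub_self (α : ℝ) {R : ℝ} (hR : R ≠ 0) (k : Fin n) (j : Zn n) :
    aa α R k (j - ee k) = aa α R k j - 2 * (α / R ^ 2) := by
  simp only [aa, xx_sub, if_pos rfl, ↓reduceIte]
  field_simp

lemma aa_add_ne (α R : ℝ) {k l : Fin n} (h : k ≠ l) (j : Zn n) :
    aa α R k (j + ee l) = aa α R k j := by
  simp [aa, xx_add, if_neg h]

lemma aa_sub_ne (α R : ℝ) {k l : Fin n} (h : k ≠ l) (j : Zn n) :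
    aa α R k (j - ee l) = aa α R k j := by
  simp [aa, xx_sub, if_neg h]

lemma wgt3_eq (R : ℝ) (j : Zn n) : wgt3 R j = ∑ k, xx R k j ^ 2 := rfl

lemma wgt3_add {R : ℝ} (hR : R ≠ 0) (j : Zn n) (k : Fin n) :
    wgt3 R (j + ee k) = wgt3 R j + (2 * xx R k j / R + 1 / R ^ 2) := by
  rw [wgt3_eq, wgt3_eq]
  have h : ∀ m : Fin n, xx R m (j + ee k) ^ 2
      = xx R m j ^ 2 + (if m = k then 2 * xx R k j / R + 1 / R ^ 2 else 0) := by
    intro m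
    rcases eq_or_ne m k with h | h
    · subst h
      rw [xx_add, if_pos rfl, if_pos rfl]
      field_simp; ring
    · rw [xx_add, if_neg h, if_neg h]; ring
  rw [Finset.sum_congr rfl fun m _ => h m, Finset.sum_add_distrib,
    Finset.sum_ite_eq' Finset.univ k]
  simp

lemma wgt3_sub {R : ℝ} (hR : R ≠ 0) (j : Zn n) (k : Fin n) :
    wgt3 R (j - ee k) = wgt3 R j + (-(2 * xx R k j / R) + 1 / R ^ 2) := by
  rw [wgt3_eq, wgt3_eq]
  have h : ∀ m : Fin n, xx R m (j - ee k) ^ 2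
      = xx R m j ^ 2 + (if m = k then -(2 * xx R k j / R) + 1 / R ^ 2 else 0) := by
    intro m
    rcases eq_or_ne m k with h | h
    · subst h
      rw [xx_sub, if_pos rfl, if_pos rfl]
      field_simp; ring
    · rw [xx_sub, if_neg h, if_neg h]; ring
  rw [Finset.sum_congr rfl fun m _ => h m, Finset.sum_add_distrib,
    Finset.sum_ite_eq' Finset.univ k]
  simp

noncomputable def Sk (α R : ℝ) (k : Fin n) (f : Zn n → ℂ) (j : Zn n) : ℂ :=
  (Real.cosh (aa α R k j + α / R ^ 2) : ℝ) * f (j + ee k)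
    + (Real.cosh (aa α R k j - α / R ^ 2) : ℝ) * f (j - ee k) - 2 * f j

noncomputable def Ak (α R : ℝ) (k : Fin n) (f : Zn n → ℂ) (j : Zn n) : ℂ :=
  -(Real.sinh (aa α R k j + α / R ^ 2) : ℝ) * f (j + ee k)
    + (Real.sinh (aa α R k j - α / R ^ 2) : ℝ) * f (j - ee k)

-- generic support-domination lemma
lemma fs_mono {β γ : Type*} [Zero β] [Zero γ] {G : Zn n → γ} {F : Zn n → β}
    (hG : (support G).Finite) (h : ∀ j, G j = 0 → F j = 0) :
    (support F).Finite :=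
  hG.subset fun j hj hG0 => hj (h j hG0)

lemma fs_shift {f : Zn n → ℂ} (hf : (support f).Finite) (v : Zn n) :
    (support fun j => f (j + v)).Finite := by
  have h : (support fun j => f (j + v)) = (fun j => j + v) ⁻¹' support f := by
    ext j; simp [support]
  rw [h]
  exact hf.preimage (add_left_injective v).injOn

lemma fs_shift_sub {f : Zn n → ℂ} (hf : (support f).Finite) (v : Zn n) :
    (support fun j => f (j - v)).Finite := by
  simpa [sub_eq_add_neg] using fs_shift hf (-v)

lemma fs_union3 {u v w : Zn n → ℂ} (hu : (support u).Finite) (hv : (support v).Finite)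
    (hw : (support w).Finite) {F : Zn n → ℂ}
    (h : ∀ j, u j = 0 → v j = 0 → w j = 0 → F j = 0) : (support F).Finite := by
  apply Set.Finite.subset ((hu.union hv).union hw)
  intro j hj
  by_contra hc
  simp only [Set.mem_union, mem_support, not_or, not_not] at hc
  exact hj (h j hc.1.1 hc.1.2 hc.2)

lemma fs_Sk {α R : ℝ} {k : Fin n} {f : Zn n → ℂ} (hf : (support f).Finite) :
    (support (Sk α R k f)).Finite := by
  apply fs_union3 (fs_shift hf (ee k)) (fs_shift_sub hf (ee k)) hf
  intro j h1 h2 h3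
  simp [Sk, h1, h2, h3]

lemma fs_Ak {α R : ℝ} {k : Fin n} {f : Zn n → ℂ} (hf : (support f).Finite) :
    (support (Ak α R k f)).Finite := by
  apply fs_union3 (fs_shift hf (ee k)) (fs_shift_sub hf (ee k)) hf
  intro j h1 h2 h3
  simp [Ak, h1, h2]

lemma fs_sum {ι : Type*} (s : Finset ι) (F : ι → Zn n → ℂ)
    (h : ∀ i ∈ s, (support (F i)).Finite) :
    (support fun j => ∑ i ∈ s, F i j).Finite := by
  classical
  induction s using Finset.induction with
  | empty => simp [support]
  | @insert a s' hx ih =>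
    apply Set.Finite.subset ((h a (by simp)).union (ih fun i hi => h i (by simp [hi])))
    intro j hj
    by_contra hc
    simp only [Set.mem_union, mem_support, not_or, not_not] at hc
    exact hj (by simp [Finset.sum_insert hx, hc.1, hc.2])

lemma summable_fs {E : Type*} [AddCommGroup E] [TopologicalSpace E] [IsTopologicalAddGroup E]
    {F : Zn n → E} (h : (support F).Finite) : Summable F :=
  summable_of_ne_finset_zero (s := h.toFinset) fun j hj => by
    by_contra h'
    exact hj (h.mem_toFinset.2 h')

noncomputable def rip (u v : Zn n → ℂ) : ℝ := ∑' j, (u j * (starRingEnd ℂ) (v j)).re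

lemma rip_comm (u v : Zn n → ℂ) : rip u v = rip v u :=
  tsum_congr fun j => by
    simp [Complex.mul_re]
    ring

lemma summable_rip_left {u : Zn n → ℂ} (v : Zn n → ℂ) (hu : (support u).Finite) :
    Summable fun j => (u j * (starRingEnd ℂ) (v j)).re :=
  summable_fs (fs_mono hu fun j h => by simp [h])

lemma rip_sub_right {u v w : Zn n → ℂ} (hu : (support u).Finite) :
    rip u (fun j => v j - w j) = rip u v - rip u w := by
  unfold rip
  rw [← Summable.tsum_sub (summable_rip_left v hu) (summable_rip_left w hu)]
  exact tsum_congr fun j => by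
    simp [map_sub, mul_sub]

lemma tsum_shift (F : Zn n → ℝ) (v : Zn n) : ∑' j, F (j + v) = ∑' j, F j :=
  (Equiv.addRight v).tsum_eq F

lemma tsum_shift_sub (F : Zn n → ℝ) (v : Zn n) : ∑' j, F (j - v) = ∑' j, F j := by
  simpa [sub_eq_add_neg] using tsum_shift F (-v)


section Adjoint

open ComplexConjugate

variable {α R : ℝ} {k : Fin n} {u w : Zn n → ℂ}

lemma summable_dominated {F : Zn n → ℝ} {u : Zn n → ℂ} (hu : (support u).Finite) (v : Zn n)
    (h : ∀ j, u (j + v) = 0 → F j = 0) : Summable F :=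
  summable_fs (fs_mono (fs_shift hu v) h)

lemma adj_Sk (hR : R ≠ 0) (hu : (support u).Finite) (hw : (support w).Finite) :
    rip (Sk α R k u) w = rip u (Sk α R k w) := by
  classical
  set cp : Zn n → ℝ := fun j => Real.cosh (aa α R k j + α / R ^ 2) with hcp
  set cm : Zn n → ℝ := fun j => Real.cosh (aa α R k j - α / R ^ 2) with hcm
  have s1 : Summable fun j => ((cp j : ℂ) * u (j + ee k) * conj (w j)).re :=
    summable_dominated hu (ee k) fun j h => by simp [h]
  have s2 : Summable fun j => ((cm j : ℂ) * u (j - ee k) * conj (w j)).re :=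
    summable_dominated hu (-(ee k)) fun j h => by
      simp only [← sub_eq_add_neg] at h; simp [h]
  have s3 : Summable fun j => ((2 : ℂ) * u j * conj (w j)).re :=
    summable_dominated hu 0 fun j h => by simp only [add_zero] at h; simp [h]
  have hL : rip (Sk α R k u) w
      = ((∑' j, ((cp j : ℂ) * u (j + ee k) * conj (w j)).re)
          + ∑' j, ((cm j : ℂ) * u (j - ee k) * conj (w j)).re)
        - ∑' j, ((2 : ℂ) * u j * conj (w j)).re := by
    rw [← Summable.tsum_add s1 s2, ← Summable.tsum_sub (s1.add s2) s3]
    simp only [rip]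
    refine tsum_congr fun j => ?_
    rw [← Complex.add_re, ← Complex.sub_re]
    congr 1
    simp only [Sk]
    ring
  have hR' : rip u (Sk α R k w)
      = ((∑' j, ((cm j : ℂ) * u j * conj (w (j - ee k))).re)
          + ∑' j, ((cp j : ℂ) * u j * conj (w (j + ee k))).re)
        - ∑' j, ((2 : ℂ) * u j * conj (w j)).re := by
    have s1' : Summable fun j => ((cm j : ℂ) * u j * conj (w (j - ee k))).re :=
      summable_dominated hu 0 fun j h => by simp only [add_zero] at h; simp [h]
    have s2' : Summable fun j => ((cp j : ℂ) * u j * conj (w (j + ee k))).re :=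
      summable_dominated hu 0 fun j h => by simp only [add_zero] at h; simp [h]
    rw [← Summable.tsum_add s1' s2', ← Summable.tsum_sub (s1'.add s2') s3]
    simp only [rip]
    refine tsum_congr fun j => ?_
    rw [← Complex.add_re, ← Complex.sub_re]
    congr 1
    simp only [Sk, map_add, map_sub, map_mul, Complex.conj_ofReal, map_ofNat]
    ring
  have hT1 : (∑' j, ((cp j : ℂ) * u (j + ee k) * conj (w j)).re)
      = ∑' j, ((cm j : ℂ) * u j * conj (w (j - ee k))).re := by
    rw [← tsum_shift (fun j => ((cm j : ℂ) * u j * conj (w (j - ee k))).re) (ee k)]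
    refine tsum_congr fun j => ?_
    have h1 : cm (j + ee k) = cp j := by
      rw [hcm, hcp]
      simp only [aa_add_self α hR]
      congr 1; ring
    rw [h1, add_sub_cancel_right]
  have hT2 : (∑' j, ((cm j : ℂ) * u (j - ee k) * conj (w j)).re)
      = ∑' j, ((cp j : ℂ) * u j * conj (w (j + ee k))).re := by
    rw [← tsum_shift_sub (fun j => ((cp j : ℂ) * u j * conj (w (j + ee k))).re) (ee k)]
    refine tsum_congr fun j => ?_
    have h1 : cp (j - ee k) = cm j := by
      rw [hcm, hcp]
      simp only [aa_sub_self α hR]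
      congr 1; ring
    rw [h1, sub_add_cancel]
  rw [hL, hR', hT1, hT2]

lemma adj_Ak (hR : R ≠ 0) (hu : (support u).Finite) (hw : (support w).Finite) :
    rip (Ak α R k u) w = - rip u (Ak α R k w) := by
  classical
  set cp : Zn n → ℝ := fun j => Real.sinh (aa α R k j + α / R ^ 2) with hcp
  set cm : Zn n → ℝ := fun j => Real.sinh (aa α R k j - α / R ^ 2) with hcm
  have s1 : Summable fun j => ((cp j : ℂ) * u (j + ee k) * conj (w j)).re :=
    summable_dominated hu (ee k) fun j h => by simp [h]
  have s2 : Summable fun j => ((cm j : ℂ) * u (j - ee k) * conj (w j)).re :=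
    summable_dominated hu (-(ee k)) fun j h => by
      simp only [← sub_eq_add_neg] at h; simp [h]
  have hL : rip (Ak α R k u) w
      = (∑' j, ((cm j : ℂ) * u (j - ee k) * conj (w j)).re)
        - ∑' j, ((cp j : ℂ) * u (j + ee k) * conj (w j)).re := by
    rw [← Summable.tsum_sub s2 s1]
    simp only [rip]
    refine tsum_congr fun j => ?_
    rw [← Complex.sub_re]
    congr 1
    simp only [Ak]
    ring
  have hR' : rip u (Ak α R k w)
      = (∑' j, ((cm j : ℂ) * u j * conj (w (j - ee k))).re)
        - ∑' j, ((cp j : ℂ) * u j * conj (w (j + ee k))).re := by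
    have s1' : Summable fun j => ((cm j : ℂ) * u j * conj (w (j - ee k))).re :=
      summable_dominated hu 0 fun j h => by simp only [add_zero] at h; simp [h]
    have s2' : Summable fun j => ((cp j : ℂ) * u j * conj (w (j + ee k))).re :=
      summable_dominated hu 0 fun j h => by simp only [add_zero] at h; simp [h]
    rw [← Summable.tsum_sub s1' s2']
    simp only [rip]
    refine tsum_congr fun j => ?_
    rw [← Complex.sub_re]
    congr 1
    simp only [Ak, map_add, map_neg, map_mul, Complex.conj_ofReal]
    ring
  have hT1 : (∑' j, ((cp j : ℂ) * u (j + ee k) * conj (w j)).re)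
      = ∑' j, ((cm j : ℂ) * u j * conj (w (j - ee k))).re := by
    rw [← tsum_shift (fun j => ((cm j : ℂ) * u j * conj (w (j - ee k))).re) (ee k)]
    refine tsum_congr fun j => ?_
    have h1 : cm (j + ee k) = cp j := by
      rw [hcm, hcp]
      simp only [aa_add_self α hR]
      congr 1; ring
    rw [h1, add_sub_cancel_right]
  have hT2 : (∑' j, ((cm j : ℂ) * u (j - ee k) * conj (w j)).re)
      = ∑' j, ((cp j : ℂ) * u j * conj (w (j + ee k))).re := by
    rw [← tsum_shift_sub (fun j => ((cp j : ℂ) * u j * conj (w (j + ee k))).re) (ee k)]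
    refine tsum_congr fun j => ?_
    have h1 : cp (j - ee k) = cm j := by
      rw [hcm, hcp]
      simp only [aa_sub_self α hR]
      congr 1; ring
    rw [h1, sub_add_cancel]
  rw [hL, hR', hT1, hT2]
  ring

end Adjoint


section Commutator

variable {α R : ℝ}

lemma commute_SA (α R : ℝ) {k l : Fin n} (h : k ≠ l) (f : Zn n → ℂ) :
    Sk α R k (Ak α R l f) = Ak α R l (Sk α R k f) := by
  funext j
  simp only [Sk, Ak, aa_add_ne α R h, aa_sub_ne α R h, aa_add_ne α R h.symm,
    aa_sub_ne α R h.symm]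
  rw [show j + ee k + ee l = j + ee l + ee k from add_right_comm j (ee k) (ee l),
    show j + ee k - ee l = j - ee l + ee k from (sub_add_eq_add_sub j (ee l) (ee k)).symm,
    show j - ee k + ee l = j + ee l - ee k from sub_add_eq_add_sub j (ee k) (ee l),
    show j - ee k - ee l = j - ee l - ee k from sub_right_comm j (ee k) (ee l)]
  ring

lemma commutator_SA (hR : R ≠ 0) (k : Fin n) (f : Zn n → ℂ) (j : Zn n) :
    Sk α R k (Ak α R k f) j - Ak α R k (Sk α R k f) j
      = ((Real.sinh (2 * (α / R ^ 2)) : ℝ) : ℂ) *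
          (2 * ((Real.cosh (2 * aa α R k j) : ℝ) : ℂ) * f j
            - f (j + ee k + ee k) - f (j - ee k - ee k)) := by
  simp only [Sk, Ak, aa_add_self α hR, aa_sub_self α hR, add_sub_cancel_right,
    sub_add_cancel]
  set A := aa α R k j with hA
  set B := α / R ^ 2 with hB
  rw [show A + 2 * B + B = A + 3 * B by ring, show A + 2 * B - B = A + B by ring,
    show A - 2 * B + B = A - B by ring, show A - 2 * B - B = A - 3 * B by ring]
  have c1 : Real.sinh (A + B) * Real.cosh (A + 3 * B)
      - Real.cosh (A + B) * Real.sinh (A + 3 * B) = -Real.sinh (2 * B) := by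
    rw [← Real.sinh_sub, show (A + B) - (A + 3 * B) = -(2 * B) by ring, Real.sinh_neg]
  have c2 : Real.cosh (A - B) * Real.sinh (A - 3 * B)
      - Real.sinh (A - B) * Real.cosh (A - 3 * B) = -Real.sinh (2 * B) := by
    rw [show Real.cosh (A - B) * Real.sinh (A - 3 * B)
          - Real.sinh (A - B) * Real.cosh (A - 3 * B)
        = -(Real.sinh (A - B) * Real.cosh (A - 3 * B)
          - Real.cosh (A - B) * Real.sinh (A - 3 * B)) by ring,
      ← Real.sinh_sub, show (A - B) - (A - 3 * B) = 2 * B by ring]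
  have c3 : Real.sinh (A + B) * Real.cosh (A + B)
      - Real.sinh (A - B) * Real.cosh (A - B) = Real.sinh (2 * B) * Real.cosh (2 * A) := by
    have h1 := Real.sinh_two_mul (A + B)
    have h2 := Real.sinh_two_mul (A - B)
    have h3 : Real.sinh (2 * (A + B))
        = Real.sinh (2 * A) * Real.cosh (2 * B) + Real.cosh (2 * A) * Real.sinh (2 * B) := by
      rw [show 2 * (A + B) = 2 * A + 2 * B by ring, Real.sinh_add]
    have h4 : Real.sinh (2 * (A - B))
        = Real.sinh (2 * A) * Real.cosh (2 * B) - Real.cosh (2 * A) * Real.sinh (2 * B) := by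
      rw [show 2 * (A - B) = 2 * A - 2 * B by ring, Real.sinh_sub]
    linarith
  have C1 := congrArg (fun t : ℝ => (t : ℂ)) c1
  have C2 := congrArg (fun t : ℝ => (t : ℂ)) c2
  have C3 := congrArg (fun t : ℝ => (t : ℂ)) c3
  push_cast at C1 C2 C3 ⊢
  linear_combination C1 * f (j + ee k + ee k) + C2 * f (j - ee k - ee k) + C3 * (2 * f j)

end Commutator


section Core

open ComplexConjugate

variable {α R : ℝ}

lemma norm_sq_complex (z : ℂ) : ‖z‖ ^ 2 = z.re ^ 2 + z.im ^ 2 := by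
  rw [show ‖z‖ ^ 2 = Complex.normSq z by rw [Complex.normSq_eq_norm_sq],
    Complex.normSq_apply]
  ring

lemma summable_sq {f : Zn n → ℂ} (hf : (support f).Finite) :
    Summable fun j => ‖f j‖ ^ 2 :=
  summable_fs (fs_mono hf fun j h => by simp [h])

lemma tsum_re_shift_le {f : Zn n → ℂ} (hf : (support f).Finite) (v : Zn n) :
    ∑' j, (f j * conj (f (j + v))).re ≤ ∑' j, ‖f j‖ ^ 2 := by
  have hsq := summable_sq hf
  have hsq' : Summable fun j => ‖f (j + v)‖ ^ 2 :=
    summable_fs (fs_mono (fs_shift hf v) fun j h => by simp [h])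
  have hpt : ∀ j, (f j * conj (f (j + v))).re ≤ (1 / 2) * (‖f j‖ ^ 2 + ‖f (j + v)‖ ^ 2) := by
    intro j
    have h1 : (f j * conj (f (j + v))).re ≤ ‖f j‖ * ‖f (j + v)‖ := by
      calc (f j * conj (f (j + v))).re ≤ ‖f j * conj (f (j + v))‖ :=
            Complex.re_le_norm _
        _ = ‖f j‖ * ‖f (j + v)‖ := by
            rw [norm_mul, Complex.norm_conj]
    nlinarith [sq_nonneg (‖f j‖ - ‖f (j + v)‖)]
  calc ∑' j, (f j * conj (f (j + v))).re
      ≤ ∑' j, (1 / 2) * (‖f j‖ ^ 2 + ‖f (j + v)‖ ^ 2) := by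
        refine Summable.tsum_le_tsum hpt ?_ ?_
        · exact summable_fs (fs_mono hf fun j h => by simp [h])
        · exact ((hsq.add hsq').mul_left _)
    _ = (1 / 2) * ((∑' j, ‖f j‖ ^ 2) + ∑' j, ‖f (j + v)‖ ^ 2) := by
        rw [tsum_mul_left, Summable.tsum_add hsq hsq']
    _ = ∑' j, ‖f j‖ ^ 2 := by
        rw [tsum_shift (fun j => ‖f j‖ ^ 2) v]
        ring

lemma tsum_re_shift_le' {f : Zn n → ℂ} (hf : (support f).Finite) (v : Zn n) :
    ∑' j, (f j * conj (f (j - v))).re ≤ ∑' j, ‖f j‖ ^ 2 := by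
  simpa [sub_eq_add_neg] using tsum_re_shift_le hf (-v)

lemma core (hα : 0 < α) (hR : 0 < R) {f : Zn n → ℂ} (hf : (support f).Finite) :
    4 * Real.sinh (2 * (α / R ^ 2)) *
        ∑' j, (∑ k, Real.sinh (aa α R k j) ^ 2) * ‖f j‖ ^ 2
      ≤ ∑' j, ‖∑ k, (Sk α R k f j + Ak α R k f j)‖ ^ 2 := by
  classical
  have hRne : R ≠ 0 := ne_of_gt hR
  have hB : 0 < Real.sinh (2 * (α / R ^ 2)) :=
    Real.sinh_pos_iff.2 (by positivity)
  -- the symmetric and antisymmetric parts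
  set Sf : Zn n → ℂ := fun j => ∑ k, Sk α R k f j with hSf
  set Af : Zn n → ℂ := fun j => ∑ k, Ak α R k f j with hAf
  have fsS : (support Sf).Finite := fs_sum _ _ fun k _ => fs_Sk hf
  have fsA : (support Af).Finite := fs_sum _ _ fun k _ => fs_Ak hf
  -- Step A : ∑'‖Sf+Af‖² ≥ 2 rip Sf Af
  have hsplit : ∑' j, ‖Sf j + Af j‖ ^ 2
      = (∑' j, (‖Sf j‖ ^ 2 + ‖Af j‖ ^ 2)) + 2 * rip Sf Af := by
    rw [rip, ← tsum_mul_left,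
      ← Summable.tsum_add ((summable_sq fsS).add (summable_sq fsA))
        ((summable_rip_left Af fsS).mul_left 2)]
    refine tsum_congr fun j => ?_
    simp only [norm_sq_complex, Complex.add_re, Complex.add_im, Complex.mul_re,
      Complex.conj_re, Complex.conj_im]
    ring
  have hstepA : 2 * rip Sf Af ≤ ∑' j, ‖Sf j + Af j‖ ^ 2 := by
    have h0 : 0 ≤ ∑' j, (‖Sf j‖ ^ 2 + ‖Af j‖ ^ 2) :=
      tsum_nonneg fun j => by positivity
    linarith [hsplit]
  -- Step B : bilinearity
  have hbil : rip Sf Af = ∑ k, ∑ l, rip (Sk α R k f) (Ak α R l f) := by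
    rw [rip]
    have hpt : ∀ j, (Sf j * conj (Af j)).re
        = ∑ k, ∑ l, (Sk α R k f j * conj (Ak α R l f j)).re := by
      intro j
      rw [hSf, hAf]
      simp only [map_sum, Finset.sum_mul_sum, ← Complex.re_sum]
    rw [tsum_congr hpt]
    rw [Summable.tsum_finsetSum (fun k _ => ?_)]
    · refine Finset.sum_congr rfl fun k _ => ?_
      rw [Summable.tsum_finsetSum (fun l _ => summable_rip_left _ (fs_Sk hf))]
      rfl
    · refine summable_fs (fs_mono (fs_Sk (α := α) (R := R) (k := k) hf)
        fun j h => ?_)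
      simp [h]
  -- Step C-E : reduce to diagonal commutators
  have hP : ∀ k l : Fin n, rip (Sk α R k f) (Ak α R l f)
      = rip f (Sk α R k (Ak α R l f)) :=
    fun k l => adj_Sk hRne hf (fs_Ak hf)
  have hQ : ∀ k l : Fin n, rip (Sk α R k f) (Ak α R l f)
      = - rip f (Ak α R l (Sk α R k f)) := by
    intro k l
    rw [rip_comm]
    exact adj_Ak hRne hf (fs_Sk hf)
  have h2 : 2 * rip Sf Af
      = ∑ k, ∑ l, (rip f (Sk α R k (Ak α R l f)) - rip f (Ak α R k (Sk α R l f))) := by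
    have e1 : rip Sf Af = ∑ k, ∑ l, rip f (Sk α R k (Ak α R l f)) := by
      rw [hbil]
      exact Finset.sum_congr rfl fun k _ => Finset.sum_congr rfl fun l _ => hP k l
    have e2 : rip Sf Af = - ∑ k, ∑ l, rip f (Ak α R k (Sk α R l f)) := by
      calc rip Sf Af = ∑ k, ∑ l, rip (Sk α R k f) (Ak α R l f) := hbil
        _ = ∑ l, ∑ k, rip (Sk α R k f) (Ak α R l f) := Finset.sum_comm
        _ = ∑ l, ∑ k, -(rip f (Ak α R l (Sk α R k f))) :=
            Finset.sum_congr rfl fun l _ => Finset.sum_congr rfl fun k _ => hQ k l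
        _ = - ∑ l, ∑ k, rip f (Ak α R l (Sk α R k f)) := by
            simp [Finset.sum_neg_distrib]
    have e3 : ∑ k : Fin n, ∑ l : Fin n,
        (rip f (Sk α R k (Ak α R l f)) - rip f (Ak α R k (Sk α R l f)))
        = (∑ k : Fin n, ∑ l : Fin n, rip f (Sk α R k (Ak α R l f)))
          - ∑ k : Fin n, ∑ l : Fin n, rip f (Ak α R k (Sk α R l f)) := by
      simp [Finset.sum_sub_distrib]
    rw [e3]
    linarith [e1, e2]
  have hdiag : 2 * rip Sf Af
      = ∑ k, rip f (fun j => Sk α R k (Ak α R k f) j - Ak α R k (Sk α R k f) j) := by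
    have hcancel : ∀ k l : Fin n,
        rip f (Sk α R k (Ak α R l f)) - rip f (Ak α R k (Sk α R l f))
        = (rip f (Sk α R k (Ak α R l f)) - rip f (Sk α R l (Ak α R k f)))
          + (if l = k then
              rip f (Sk α R k (Ak α R k f)) - rip f (Ak α R k (Sk α R k f)) else 0) := by
      intro k l
      rcases eq_or_ne l k with h | h
      · subst h; simp
      · rw [if_neg h, ← commute_SA α R h f]
        ring
    have hzero : ∑ k : Fin n, ∑ l : Fin n,
        (rip f (Sk α R k (Ak α R l f)) - rip f (Sk α R l (Ak α R k f))) = 0 := by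
      have hc : ∑ k : Fin n, ∑ l : Fin n, rip f (Sk α R l (Ak α R k f))
          = ∑ k : Fin n, ∑ l : Fin n, rip f (Sk α R k (Ak α R l f)) := Finset.sum_comm
      simp [Finset.sum_sub_distrib, hc]
    have hite : ∑ k : Fin n, ∑ l : Fin n,
        (if l = k then
          rip f (Sk α R k (Ak α R k f)) - rip f (Ak α R k (Sk α R k f)) else 0)
        = ∑ k : Fin n,
            (rip f (Sk α R k (Ak α R k f)) - rip f (Ak α R k (Sk α R k f))) := by
      refine Finset.sum_congr rfl fun k _ => ?_
      rw [Finset.sum_ite_eq' Finset.univ k]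
      simp
    rw [h2, Finset.sum_congr rfl fun k _ =>
      Finset.sum_congr rfl fun l _ => hcancel k l]
    rw [Finset.sum_congr rfl fun k (_ : k ∈ Finset.univ) => Finset.sum_add_distrib,
      Finset.sum_add_distrib, hzero, hite, zero_add]
    exact Finset.sum_congr rfl fun k _ => (rip_sub_right hf).symm
  -- Step F-G : lower bound for each diagonal commutator
  have hek : ∀ k : Fin n,
      Real.sinh (2 * (α / R ^ 2)) * ∑' j, 4 * Real.sinh (aa α R k j) ^ 2 * ‖f j‖ ^ 2
        ≤ rip f (fun j => Sk α R k (Ak α R k f) j - Ak α R k (Sk α R k f) j) := by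
    intro k
    have hcomm : (fun j => Sk α R k (Ak α R k f) j - Ak α R k (Sk α R k f) j)
        = fun j => ((Real.sinh (2 * (α / R ^ 2)) : ℝ) : ℂ) *
            (2 * ((Real.cosh (2 * aa α R k j) : ℝ) : ℂ) * f j
              - f (j + ee k + ee k) - f (j - ee k - ee k)) :=
      funext (commutator_SA hRne k f)
    rw [hcomm, rip]
    have hpt : ∀ j, (f j * conj (((Real.sinh (2 * (α / R ^ 2)) : ℝ) : ℂ) *
            (2 * ((Real.cosh (2 * aa α R k j) : ℝ) : ℂ) * f j
              - f (j + ee k + ee k) - f (j - ee k - ee k)))).re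
        = Real.sinh (2 * (α / R ^ 2)) * (2 * Real.cosh (2 * aa α R k j) * ‖f j‖ ^ 2
            - (f j * conj (f (j + ee k + ee k))).re
            - (f j * conj (f (j - ee k - ee k))).re) := by
      intro j
      simp only [norm_sq_complex, map_mul, map_sub, Complex.conj_ofReal, map_ofNat,
        Complex.mul_re, Complex.mul_im, Complex.sub_re, Complex.sub_im,
        Complex.ofReal_re, Complex.ofReal_im, Complex.conj_re, Complex.conj_im,
        Complex.re_ofNat, Complex.im_ofNat]
      ring
    rw [tsum_congr hpt, tsum_mul_left]
    refine mul_le_mul_of_nonneg_left ?_ (le_of_lt hB)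
    -- summabilities
    have s0 : Summable fun j => 2 * Real.cosh (2 * aa α R k j) * ‖f j‖ ^ 2 :=
      summable_fs (fs_mono hf fun j h => by simp [h])
    have sp : Summable fun j => (f j * conj (f (j + ee k + ee k))).re :=
      summable_fs (fs_mono hf fun j h => by simp [h])
    have sm : Summable fun j => (f j * conj (f (j - ee k - ee k))).re :=
      summable_fs (fs_mono hf fun j h => by simp [h])
    have hplus : ∑' j, (f j * conj (f (j + ee k + ee k))).re ≤ ∑' j, ‖f j‖ ^ 2 := by
      have := tsum_re_shift_le hf (ee k + ee k)
      simpa [← add_assoc] using this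
    have hminus : ∑' j, (f j * conj (f (j - ee k - ee k))).re ≤ ∑' j, ‖f j‖ ^ 2 := by
      have := tsum_re_shift_le' hf (ee k + ee k)
      simpa [sub_sub] using this
    calc ∑' j, 4 * Real.sinh (aa α R k j) ^ 2 * ‖f j‖ ^ 2
        = ∑' j, (2 * Real.cosh (2 * aa α R k j) * ‖f j‖ ^ 2 - 2 * ‖f j‖ ^ 2) := by
          refine tsum_congr fun j => ?_
          have h1 := Real.cosh_two_mul (aa α R k j)
          have h2 := Real.cosh_sq_sub_sinh_sq (aa α R k j)
          nlinarith [h1, h2]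
      _ = (∑' j, 2 * Real.cosh (2 * aa α R k j) * ‖f j‖ ^ 2) - 2 * ∑' j, ‖f j‖ ^ 2 := by
          rw [Summable.tsum_sub s0 ((summable_sq hf).mul_left 2), tsum_mul_left]
      _ ≤ (∑' j, 2 * Real.cosh (2 * aa α R k j) * ‖f j‖ ^ 2)
          - ((∑' j, (f j * conj (f (j + ee k + ee k))).re)
            + ∑' j, (f j * conj (f (j - ee k - ee k))).re) := by
          linarith [hplus, hminus]
      _ = ∑' j, (2 * Real.cosh (2 * aa α R k j) * ‖f j‖ ^ 2
            - (f j * conj (f (j + ee k + ee k))).re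
            - (f j * conj (f (j - ee k - ee k))).re) := by
          rw [← Summable.tsum_add sp sm, ← Summable.tsum_sub s0 (sp.add sm)]
          exact tsum_congr fun j => by ring
  -- final assembly
  have hsum : ∑ k, Real.sinh (2 * (α / R ^ 2)) *
        ∑' j, 4 * Real.sinh (aa α R k j) ^ 2 * ‖f j‖ ^ 2
      = 4 * Real.sinh (2 * (α / R ^ 2)) *
          ∑' j, (∑ k, Real.sinh (aa α R k j) ^ 2) * ‖f j‖ ^ 2 := by
    rw [← Finset.mul_sum,
      ← Summable.tsum_finsetSum (fun (k : Fin n) (_ : k ∈ Finset.univ) =>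
        summable_fs (fs_mono hf fun j h => by simp [h]))]
    rw [tsum_congr (fun j => show
        (∑ k, 4 * Real.sinh (aa α R k j) ^ 2 * ‖f j‖ ^ 2)
          = 4 * ((∑ k, Real.sinh (aa α R k j) ^ 2) * ‖f j‖ ^ 2) from by
      rw [← Finset.sum_mul, ← Finset.mul_sum, mul_assoc])]
    rw [tsum_mul_left]
    ring
  calc 4 * Real.sinh (2 * (α / R ^ 2)) *
        ∑' j, (∑ k, Real.sinh (aa α R k j) ^ 2) * ‖f j‖ ^ 2
      = ∑ k, Real.sinh (2 * (α / R ^ 2)) *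
          ∑' j, 4 * Real.sinh (aa α R k j) ^ 2 * ‖f j‖ ^ 2 := hsum.symm
    _ ≤ ∑ k, rip f (fun j => Sk α R k (Ak α R k f) j - Ak α R k (Sk α R k f) j) :=
        Finset.sum_le_sum fun k _ => hek k
    _ = 2 * rip Sf Af := hdiag.symm
    _ ≤ ∑' j, ‖Sf j + Af j‖ ^ 2 := hstepA
    _ = ∑' j, ‖∑ k, (Sk α R k f j + Ak α R k f j)‖ ^ 2 := by
        refine tsum_congr fun j => ?_
        rw [Finset.sum_add_distrib]

end Core


section Final

open ComplexConjugate

variable {α R : ℝ}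

lemma key_conj (hR : R ≠ 0) (α : ℝ) (g : Zn n → ℂ) (j : Zn n) :
    ((Real.exp (α * wgt3 R j) : ℝ) : ℂ) * discreteLap g j
      = ∑ k, (Sk α R k (fun i => ((Real.exp (α * wgt3 R i) : ℝ) : ℂ) * g i) j
            + Ak α R k (fun i => ((Real.exp (α * wgt3 R i) : ℝ) : ℂ) * g i) j) := by
  rw [discreteLap, Finset.mul_sum]
  refine Finset.sum_congr rfl fun k _ => ?_
  have hW1 : Real.exp (-(aa α R k j + α / R ^ 2)) * Real.exp (α * wgt3 R (j + ee k))
      = Real.exp (α * wgt3 R j) := by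
    rw [← Real.exp_add, wgt3_add hR]
    congr 1
    simp only [aa]
    ring
  have hW2 : Real.exp (aa α R k j - α / R ^ 2) * Real.exp (α * wgt3 R (j - ee k))
      = Real.exp (α * wgt3 R j) := by
    rw [← Real.exp_add, wgt3_sub hR]
    congr 1
    simp only [aa]
    ring
  have d1 : ((Real.exp (-(aa α R k j + α / R ^ 2)) : ℝ) : ℂ)
        * ((Real.exp (α * wgt3 R (j + ee k)) : ℝ) : ℂ)
      = ((Real.exp (α * wgt3 R j) : ℝ) : ℂ) := by
    rw [← Complex.ofReal_mul, hW1]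
  have d2 : ((Real.exp (aa α R k j - α / R ^ 2) : ℝ) : ℂ)
        * ((Real.exp (α * wgt3 R (j - ee k)) : ℝ) : ℂ)
      = ((Real.exp (α * wgt3 R j) : ℝ) : ℂ) := by
    rw [← Complex.ofReal_mul, hW2]
  have c1 : ((Real.exp (-(aa α R k j + α / R ^ 2)) : ℝ) : ℂ)
      = ((Real.cosh (aa α R k j + α / R ^ 2) : ℝ) : ℂ)
        - ((Real.sinh (aa α R k j + α / R ^ 2) : ℝ) : ℂ) := by
    rw [← Complex.ofReal_sub, Real.cosh_sub_sinh]
  have c2 : ((Real.exp (aa α R k j - α / R ^ 2) : ℝ) : ℂ)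
      = ((Real.cosh (aa α R k j - α / R ^ 2) : ℝ) : ℂ)
        + ((Real.sinh (aa α R k j - α / R ^ 2) : ℝ) : ℂ) := by
    rw [← Complex.ofReal_add, Real.cosh_add_sinh]
  simp only [Sk, Ak]
  show ((Real.exp (α * wgt3 R j) : ℝ) : ℂ) *
      (g (j + ee k) + g (j - ee k) - 2 * g j) = _
  linear_combination (- g (j + ee k)) * d1 + (- g (j - ee k)) * d2
    + ((Real.exp (α * wgt3 R (j + ee k)) : ℝ) : ℂ) * g (j + ee k) * c1
    + ((Real.exp (α * wgt3 R (j - ee k)) : ℝ) : ℂ) * g (j - ee k) * c2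

lemma sinh_abs' (x : ℝ) : |Real.sinh x| = Real.sinh |x| := by
  rcases le_or_gt 0 x with h | h
  · rw [abs_of_nonneg h, abs_of_nonneg (Real.sinh_nonneg_iff.2 h)]
  · rw [abs_of_neg h, abs_of_neg (by simpa using Real.sinh_lt_sinh.2 h), Real.sinh_neg]

lemma weight_bound (hα : 0 < α) (hR : 0 < R) (hn : 0 < n) {j : Zn n}
    (hwgt : 1 ≤ wgt3 R j) :
    Real.sinh (2 * α / (Real.sqrt n * R)) ^ 2 ≤ ∑ k, Real.sinh (aa α R k j) ^ 2 := by
  have hnR : (0:ℝ) < n := by exact_mod_cast hn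
  have hsn : (0:ℝ) < Real.sqrt n := Real.sqrt_pos.2 hnR
  -- some coordinate carries weight at least 1/n
  have hex : ∃ k : Fin n, (1:ℝ) / n ≤ xx R k j ^ 2 := by
    have : Nonempty (Fin n) := Fin.pos_iff_nonempty.1 hn
    have hne : (Finset.univ : Finset (Fin n)).Nonempty := Finset.univ_nonempty
    have hsum : ∑ _k : Fin n, (1:ℝ) / n ≤ ∑ k, xx R k j ^ 2 := by
      rw [Finset.sum_const, Finset.card_univ, Fintype.card_fin, nsmul_eq_mul,
        mul_one_div, div_self (ne_of_gt hnR), ← wgt3_eq]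
      exact hwgt
    obtain ⟨k, _, hk⟩ := Finset.exists_le_of_sum_le hne hsum
    exact ⟨k, hk⟩
  obtain ⟨k, hk⟩ := hex
  have h1 : 1 / Real.sqrt n ≤ |xx R k j| := by
    have h := Real.sqrt_le_sqrt hk
    rwa [Real.sqrt_sq_eq_abs, one_div, Real.sqrt_inv, ← one_div] at h
  have habs : 2 * α / (Real.sqrt n * R) ≤ |aa α R k j| := by
    rw [show aa α R k j = 2 * α / R * xx R k j from by rw [aa]; ring, abs_mul,
      abs_of_pos (show (0:ℝ) < 2 * α / R by positivity)]
    calc 2 * α / (Real.sqrt n * R) = 2 * α / R * (1 / Real.sqrt n) := by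
          field_simp
      _ ≤ 2 * α / R * |xx R k j| :=
          mul_le_mul_of_nonneg_left h1 (by positivity)
  have hm0 : 0 ≤ 2 * α / (Real.sqrt n * R) := by positivity
  have hmono : Real.sinh (2 * α / (Real.sqrt n * R)) ≤ |Real.sinh (aa α R k j)| := by
    rw [sinh_abs']
    exact Real.sinh_le_sinh.2 habs
  have hsq : Real.sinh (2 * α / (Real.sqrt n * R)) ^ 2 ≤ Real.sinh (aa α R k j) ^ 2 := by
    have h2 := pow_le_pow_left₀ (Real.sinh_nonneg_iff.2 hm0) hmono 2
    rwa [← sq_abs (Real.sinh (aa α R k j))]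
  exact hsq.trans (Finset.single_le_sum
    (fun i (_ : i ∈ Finset.univ) => sq_nonneg (Real.sinh (aa α R i j))) (Finset.mem_univ k))

end Final

end CarlemanAux


open CarlemanAux

/-- **Stationary discrete Carleman inequality** (dimension `d+1 ≥ 1`).
There is `c = c(d) > 0` such that for all `α > 0`, `R > 0` and every finitely supported
`g : ℤ^d → ℂ` with support contained in `{j : |j/R + 3e₁|² ≥ 1}`,
`√(sinh(2α/R²)) sinh(2α/(√d R)) ‖e^{α|j/R+3e₁|²} g‖_{ℓ²} ≤ c ‖e^{α|j/R+3e₁|²} Δ_d g‖_{ℓ²}`. -/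

theorem carleman_stationary (d : ℕ) :
    ∃ c : ℝ, 0 < c ∧
      ∀ α R : ℝ, 0 < α → 0 < R →
        ∀ g : (Fin (d + 1) → ℤ) → ℂ,
          (Function.support g).Finite →
          (∀ j, g j ≠ 0 → 1 ≤ wgt3 R j) →
          Real.sqrt (Real.sinh (2 * α / R ^ 2)) *
              Real.sinh (2 * α / (Real.sqrt (d + 1) * R)) *
              Real.sqrt (∑' j : Fin (d + 1) → ℤ,
                Real.exp (α * wgt3 R j) ^ 2 * ‖g j‖ ^ 2) ≤
            c * Real.sqrt (∑' j : Fin (d + 1) → ℤ,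
                Real.exp (α * wgt3 R j) ^ 2 * ‖discreteLap g j‖ ^ 2) := by
  classical
  refine ⟨1/2, by norm_num, ?_⟩
  intro α R hα hR g hg hsupp
  have hRne : R ≠ 0 := ne_of_gt hR
  set f : Zn (d+1) → ℂ := fun j => ((Real.exp (α * wgt3 R j) : ℝ) : ℂ) * g j with hfdef
  have hfs : (Function.support f).Finite :=
    fs_mono hg fun j h => by simp [hfdef, h]
  have hnorm : ∀ (j : Zn (d+1)) (z : ℂ),
      ‖((Real.exp (α * wgt3 R j) : ℝ) : ℂ) * z‖ ^ 2
        = Real.exp (α * wgt3 R j) ^ 2 * ‖z‖ ^ 2 := by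
    intro j z
    rw [norm_mul, Complex.norm_real, Real.norm_eq_abs, abs_of_pos (Real.exp_pos _), mul_pow]
  have hQ : (∑' j : Fin (d+1) → ℤ, Real.exp (α * wgt3 R j) ^ 2 * ‖g j‖ ^ 2)
      = ∑' j, ‖f j‖ ^ 2 :=
    tsum_congr fun j => (hnorm j (g j)).symm
  have hT : (∑' j : Fin (d+1) → ℤ, Real.exp (α * wgt3 R j) ^ 2 * ‖discreteLap g j‖ ^ 2)
      = ∑' j, ‖∑ k, (Sk α R k f j + Ak α R k f j)‖ ^ 2 := by
    refine tsum_congr fun j => ?_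
    rw [← hnorm j (discreteLap g j), key_conj hRne α g j]
  have hcore := core hα hR hfs
  have hcast : Real.sqrt ((d + 1 : ℕ) : ℝ) = Real.sqrt ((d : ℝ) + 1) := by
    norm_num
  have hwb : ∀ j : Zn (d+1), f j ≠ 0 →
      Real.sinh (2 * α / (Real.sqrt ((d : ℝ) + 1) * R)) ^ 2
        ≤ ∑ k, Real.sinh (aa α R k j) ^ 2 := by
    intro j hj
    have hgj : g j ≠ 0 := by
      intro h
      exact hj (by simp [hfdef, h])
    have := weight_bound hα hR (Nat.succ_pos d) (hsupp j hgj)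
    rwa [hcast] at this
  have hQle : Real.sinh (2 * α / (Real.sqrt ((d : ℝ) + 1) * R)) ^ 2 * ∑' j, ‖f j‖ ^ 2
      ≤ ∑' j, (∑ k, Real.sinh (aa α R k j) ^ 2) * ‖f j‖ ^ 2 := by
    rw [← tsum_mul_left]
    refine Summable.tsum_le_tsum (fun j => ?_) ((summable_sq hfs).mul_left _)
      (summable_fs (fs_mono hfs fun j h => by simp [h]))
    rcases eq_or_ne (f j) 0 with h | h
    · simp [h]
    · exact mul_le_mul_of_nonneg_right (hwb j h) (sq_nonneg _)
  have hs0 : 0 ≤ Real.sinh (2 * α / R ^ 2) :=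
    Real.sinh_nonneg_iff.2 (by positivity)
  have hm0 : 0 ≤ 2 * α / (Real.sqrt ((d : ℝ) + 1) * R) := by
    have : (0:ℝ) < Real.sqrt ((d : ℝ) + 1) := Real.sqrt_pos.2 (by positivity)
    positivity
  have hsm0 : 0 ≤ Real.sinh (2 * α / (Real.sqrt ((d : ℝ) + 1) * R)) :=
    Real.sinh_nonneg_iff.2 hm0
  have hQ0 : 0 ≤ ∑' j : Zn (d+1), ‖f j‖ ^ 2 := tsum_nonneg fun j => by positivity
  have hT0 : 0 ≤ ∑' j : Zn (d+1), ‖∑ k, (Sk α R k f j + Ak α R k f j)‖ ^ 2 :=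
    tsum_nonneg fun j => by positivity
  have harg : 2 * (α / R ^ 2) = 2 * α / R ^ 2 := by ring
  have hchain : 4 * Real.sinh (2 * α / R ^ 2) *
      (Real.sinh (2 * α / (Real.sqrt ((d : ℝ) + 1) * R)) ^ 2 * ∑' j, ‖f j‖ ^ 2)
      ≤ ∑' j, ‖∑ k, (Sk α R k f j + Ak α R k f j)‖ ^ 2 := by
    calc 4 * Real.sinh (2 * α / R ^ 2) *
        (Real.sinh (2 * α / (Real.sqrt ((d : ℝ) + 1) * R)) ^ 2 * ∑' j, ‖f j‖ ^ 2)
        ≤ 4 * Real.sinh (2 * α / R ^ 2) *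
            ∑' j, (∑ k, Real.sinh (aa α R k j) ^ 2) * ‖f j‖ ^ 2 :=
          mul_le_mul_of_nonneg_left hQle (by positivity)
      _ ≤ ∑' j, ‖∑ k, (Sk α R k f j + Ak α R k f j)‖ ^ 2 := by
          rw [← harg] at *
          exact hcore
  rw [hQ, hT]
  have hL0 : 0 ≤ Real.sqrt (Real.sinh (2 * α / R ^ 2)) *
      Real.sinh (2 * α / (Real.sqrt ((d : ℝ) + 1) * R)) *
      Real.sqrt (∑' j, ‖f j‖ ^ 2) := by
    have := Real.sqrt_nonneg (Real.sinh (2 * α / R ^ 2))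
    have := Real.sqrt_nonneg (∑' j : Zn (d+1), ‖f j‖ ^ 2)
    positivity
  have hR0 : 0 ≤ 1/2 * Real.sqrt (∑' j : Zn (d+1),
      ‖∑ k, (Sk α R k f j + Ak α R k f j)‖ ^ 2) := by positivity
  have h2 : (Real.sqrt (Real.sinh (2 * α / R ^ 2)) *
      Real.sinh (2 * α / (Real.sqrt ((d : ℝ) + 1) * R)) *
      Real.sqrt (∑' j, ‖f j‖ ^ 2)) ^ 2
      ≤ (1/2 * Real.sqrt (∑' j : Zn (d+1),
          ‖∑ k, (Sk α R k f j + Ak α R k f j)‖ ^ 2)) ^ 2 := by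
    rw [mul_pow, mul_pow, mul_pow, Real.sq_sqrt hs0, Real.sq_sqrt hQ0, Real.sq_sqrt hT0]
    nlinarith [hchain]
  have h3 := Real.sqrt_le_sqrt h2
  rwa [Real.sqrt_sq hL0, Real.sqrt_sq hR0] at h3
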